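/- Suppose (H₀) holds, h is a Bregman function with zone C, f(x) = ⟨c, x⟩ is linear, and the set S(P) of minimizers of f over cl F is nonempty. Then the global solution x : [0, ∞) → F of the steepest descent equation ẋ(t) = −∇²h(x(t))⁻¹[I − Aᵀ(A∇²h(x(t))⁻¹Aᵀ)⁻¹A∇²h(x(t))⁻¹]c with x(0) = x⁰ converges as t → ∞ to the unique solution x* of the problem: minimize D_h(x, x⁰) over x ∈ S(P). -/

import Mathlib

noncomputable section
open Set Filter Topology Matrix MeasureTheory

abbrev E (n : ℕ) := EuclideanSpace ℝ (Fin n)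

/-- Action of a matrix on a vector of `EuclideanSpace ℝ (Fin n)`. -/
def matVec {n : ℕ} (M : Matrix (Fin n) (Fin n) ℝ) (v : E n) : E n := WithLp.toLp 2 (M.mulVec v)

/-- The continuous linear map on Euclidean space associated with a matrix. -/
def matCLM {n : ℕ} (M : Matrix (Fin n) (Fin n) ℝ) : E n →L[ℝ] E n :=
  LinearMap.toContinuousLinearMap (Matrix.toEuclideanLin M)

/-- The steepest descent vector field
`x ↦ −H(x)⁻¹[I − Aᵀ(A H(x)⁻¹ Aᵀ)⁻¹ A H(x)⁻¹] g(x)` for the Hessian metric. -/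
def sdVF {n m : ℕ} (A : Matrix (Fin m) (Fin n) ℝ)
    (Hess : E n → Matrix (Fin n) (Fin n) ℝ) (g : E n → E n) (x : E n) : E n :=
  -(matVec ((Hess x)⁻¹ * (1 - Aᵀ * (A * (Hess x)⁻¹ * Aᵀ)⁻¹ * A * (Hess x)⁻¹)) (g x))

/-- The `D`-function (Bregman distance) of `h`: `D_h(a,y) = h(a) − h(y) − ⟨∇h(y), a − y⟩`. -/
def Dh {n : ℕ} (h : E n → ℝ) (a y : E n) : ℝ :=
  h a - h y - (inner ℝ (gradient h y) (a - y) : ℝ)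

/- ### Auxiliary lemmas -/

lemma grad_ineq {n : ℕ} {s : Set (E n)} {h : E n → ℝ} (hc : ConvexOn ℝ s h)
    {y a : E n} (hy : y ∈ s) (ha : a ∈ s) {g : E n} (hg : HasGradientAt h g y) :
    h y + (inner ℝ g (a - y) : ℝ) ≤ h a := by
  set L : ℝ → E n := fun t => y + t • (a - y) with hL
  have hLlin : L = fun t => (AffineMap.lineMap y a : ℝ →ᵃ[ℝ] E n) t := by
    funext t
    simp [hL, AffineMap.lineMap_apply]
    module
  have hconv : ConvexOn ℝ (Icc (0:ℝ) 1) (h ∘ L) := by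
    have haff := hc.comp_affineMap (AffineMap.lineMap y a : ℝ →ᵃ[ℝ] E n)
    refine ConvexOn.subset (by rw [hLlin]; exact haff) (fun t ht => ?_) (convex_Icc 0 1)
    have : (AffineMap.lineMap y a : ℝ →ᵃ[ℝ] E n) t ∈ s :=
      (hc.1).lineMap_mem hy ha ht
    simpa using this
  have hL0 : L 0 = y := by simp [hL]
  have hL1 : L 1 = a := by simp [hL]
  have hderiv : HasDerivAt (h ∘ L) (inner ℝ g (a - y) : ℝ) 0 := by
    have hL' : HasDerivAt L (a - y) 0 := by
      simpa [hL] using ((hasDerivAt_id (0:ℝ)).smul_const (a - y)).const_add y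
    have hfd : HasFDerivAt h ((InnerProductSpace.toDual ℝ (E n)) g) (L 0) := by
      rw [hL0]; exact hg.hasFDerivAt
    have := hfd.comp_hasDerivAt 0 hL'
    simpa using this
  have := hconv.le_slope_of_hasDerivAt (by simp : (0:ℝ) ∈ Icc (0:ℝ) 1)
    (by simp : (1:ℝ) ∈ Icc (0:ℝ) 1) one_pos hderiv
  rw [slope_def_field] at this
  simp only [Function.comp, hL0, hL1] at this
  simp only [sub_zero, div_one] at this
  linarith [this]

lemma Dh_nonneg {n : ℕ} {C : Set (E n)} {h : E n → ℝ}
    (hCopen : IsOpen C) (hC2 : ContDiffOn ℝ 2 h C)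
    (hconv : ConvexOn ℝ (closure C) h)
    {a y : E n} (ha : a ∈ closure C) (hy : y ∈ C) : 0 ≤ Dh h a y := by
  have hdiff : DifferentiableAt ℝ h y :=
    (hC2.differentiableOn (by norm_num)).differentiableAt (hCopen.mem_nhds hy)
  have := grad_ineq hconv (subset_closure hy) ha hdiff.hasGradientAt
  simp only [Dh]
  linarith [this]

lemma midpoint_contra {n : ℕ} {C : Set (E n)} {h : E n → ℝ}
    (hCopen : IsOpen C) (hC2 : ContDiffOn ℝ 2 h C)
    (hBstrict : StrictConvexOn ℝ (closure C) h)
    {p q : E n} (hp : p ∈ closure C) (hq : q ∈ closure C) (hpq : p ≠ q)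
    {y : ℕ → E n} (hy : ∀ k, y k ∈ C)
    (h1 : Tendsto (fun k => Dh h p (y k)) atTop (𝓝 0))
    (h2 : Tendsto (fun k => Dh h q (y k)) atTop (𝓝 0)) : False := by
  set mid : E n := (1/2 : ℝ) • p + (1/2 : ℝ) • q with hmid
  have hmidmem : mid ∈ closure C := hBstrict.1 hp hq (by norm_num) (by norm_num) (by norm_num)
  have hδ : h mid < (1/2 : ℝ) * h p + (1/2 : ℝ) * h q :=
    hBstrict.2 hp hq hpq (by norm_num) (by norm_num) (by norm_num)
  set δ : ℝ := (1/2 : ℝ) * h p + (1/2 : ℝ) * h q - h mid with hδdef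
  have hδpos : 0 < δ := by rw [hδdef]; linarith
  have key : ∀ k, δ ≤ (1/2 : ℝ) * Dh h p (y k) + (1/2 : ℝ) * Dh h q (y k) := by
    intro k
    have hnn : 0 ≤ Dh h mid (y k) := Dh_nonneg hCopen hC2 hBstrict.convexOn hmidmem (hy k)
    have hlin : (inner ℝ (gradient h (y k)) (mid - y k) : ℝ)
        = (1/2 : ℝ) * (inner ℝ (gradient h (y k)) (p - y k) : ℝ)
          + (1/2 : ℝ) * (inner ℝ (gradient h (y k)) (q - y k) : ℝ) := by
      rw [← real_inner_smul_right, ← real_inner_smul_right, ← inner_add_right]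
      congr 1
      rw [hmid]
      module
    simp only [Dh] at hnn ⊢
    rw [hlin] at hnn
    linarith [hnn]
  have hsum : Tendsto (fun k => (1/2 : ℝ) * Dh h p (y k) + (1/2 : ℝ) * Dh h q (y k)) atTop (𝓝 0) := by
    have := (h1.const_mul (1/2 : ℝ)).add (h2.const_mul (1/2 : ℝ))
    simpa using this
  have := ge_of_tendsto hsum (Eventually.of_forall key)
  linarith

lemma inner_eq_dot {n : ℕ} (u v : E n) : (inner ℝ u v : ℝ) = u ⬝ᵥ v := by
  simp [PiLp.inner_apply, dotProduct, mul_comm]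

lemma matVec_negE {n : ℕ} (M : Matrix (Fin n) (Fin n) ℝ) (v : E n) :
    matVec M (-v) = -(matVec M v) := by
  ext i
  simp [matVec, Matrix.mulVec, dotProduct, PiLp.neg_apply, mul_neg, Finset.sum_neg_distrib]

lemma matCLM_apply {n : ℕ} (M : Matrix (Fin n) (Fin n) ℝ) (v : E n) :
    matCLM M v = matVec M v := by
  simp [matCLM, matVec, Matrix.toEuclideanLin]
  rfl

lemma key_inner {n m : ℕ} (A : Matrix (Fin m) (Fin n) ℝ) (b : Fin m → ℝ)
    (H : Matrix (Fin n) (Fin n) ℝ) (hH : IsUnit H.det) (c z x' : E n)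
    (hz : A.mulVec z = b) (hx : A.mulVec x' = b) :
    (inner ℝ (matVec H (-(matVec (H⁻¹ * (1 - Aᵀ * (A * H⁻¹ * Aᵀ)⁻¹ * A * H⁻¹)) c))) (z - x') : ℝ)
      = -(inner ℝ c (z - x') : ℝ) := by
  set Q : Matrix (Fin n) (Fin n) ℝ := 1 - Aᵀ * (A * H⁻¹ * Aᵀ)⁻¹ * A * H⁻¹ with hQ
  have h1 : matVec H (-(matVec (H⁻¹ * Q) c)) = -(matVec Q c) := by
    rw [matVec_negE]
    simp only [matVec, Matrix.mulVec_mulVec]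
    rw [← Matrix.mul_assoc, Matrix.mul_nonsing_inv _ hH, Matrix.one_mul]
  have hAzx : A.mulVec (fun i => z i - x' i) = 0 := by
    funext i
    have e1 := congrFun hz i
    have e2 := congrFun hx i
    simp only [Matrix.mulVec, dotProduct, mul_sub, Finset.sum_sub_distrib] at *
    simp [e1, e2]
  rw [h1, inner_eq_dot, inner_eq_dot]
  have hsub : (z - x' : E n) = fun i => z i - x' i := rfl
  rw [hsub]
  set d : Fin n → ℝ := fun i => z i - x' i with hd
  have h2 : ((Aᵀ * ((A * H⁻¹ * Aᵀ)⁻¹ * A * H⁻¹)).mulVec c) ⬝ᵥ d = 0 := by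
    rw [← Matrix.mulVec_mulVec, Matrix.mulVec_transpose, ← Matrix.dotProduct_mulVec, hAzx,
      dotProduct_zero]
  have hQexp : Q = 1 - Aᵀ * ((A * H⁻¹ * Aᵀ)⁻¹ * A * H⁻¹) := by
    rw [hQ]; simp [Matrix.mul_assoc]
  have hnegE : (-(matVec Q c) : E n) = -(matVec Q c : Fin n → ℝ) := rfl
  rw [hnegE]
  set cp : Fin n → ℝ := fun i => c i with hcp
  have h3 : (matVec Q c : Fin n → ℝ)
      = cp - (Aᵀ * ((A * H⁻¹ * Aᵀ)⁻¹ * A * H⁻¹)).mulVec c := by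
    show Q.mulVec c = _
    rw [hQexp, Matrix.sub_mulVec, Matrix.one_mulVec]
  rw [neg_dotProduct, h3, sub_dotProduct, h2, sub_zero]

lemma hasDerivAt_Dh {n m : ℕ} (A : Matrix (Fin m) (Fin n) ℝ) (b : Fin m → ℝ)
    {C : Set (E n)} (hCopen : IsOpen C) {h : E n → ℝ} (hC2 : ContDiffOn ℝ 2 h C)
    {Hess : E n → Matrix (Fin n) (Fin n) ℝ}
    (hHess : ∀ x ∈ C, HasFDerivAt (gradient h) (matCLM (Hess x)) x)
    (hHpos : ∀ x ∈ C, (Hess x).PosDef)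
    (c z : E n) (hz : A.mulVec z = b)
    {x : ℝ → E n} {t : ℝ} (hxt : x t ∈ C) (hAx : A.mulVec (x t) = b)
    (hx' : HasDerivAt x (sdVF A Hess (fun _ => c) (x t)) t) :
    HasDerivAt (fun s => Dh h z (x s)) (inner ℝ c (z - x t) : ℝ) t := by
  set v : E n := sdVF A Hess (fun _ => c) (x t) with hv
  have hdiffat : DifferentiableAt ℝ h (x t) :=
    (hC2.differentiableOn (by norm_num)).differentiableAt (hCopen.mem_nhds hxt)
  have hfd : HasFDerivAt h ((InnerProductSpace.toDual ℝ (E n)) (gradient h (x t))) (x t) :=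
    hdiffat.hasGradientAt.hasFDerivAt
  have d1 : HasDerivAt (fun s => h (x s)) (inner ℝ (gradient h (x t)) v : ℝ) t := by
    have := hfd.comp_hasDerivAt t hx'
    simp at this ⊢; exact this
  have dG : HasDerivAt (fun s => gradient h (x s)) (matCLM (Hess (x t)) v) t :=
    (hHess _ hxt).comp_hasDerivAt t hx'
  have d2 : HasDerivAt (fun s => z - x s) (-v) t := hx'.const_sub z
  have dInner : HasDerivAt (fun s => (inner ℝ (gradient h (x s)) (z - x s) : ℝ))
      ((inner ℝ (gradient h (x t)) (-v) : ℝ) + (inner ℝ (matCLM (Hess (x t)) v) (z - x t) : ℝ)) t :=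
    dG.inner ℝ d2
  have dtot : HasDerivAt (fun s => h z - h (x s) - (inner ℝ (gradient h (x s)) (z - x s) : ℝ))
      (0 - (inner ℝ (gradient h (x t)) v : ℝ)
        - ((inner ℝ (gradient h (x t)) (-v) : ℝ) + (inner ℝ (matCLM (Hess (x t)) v) (z - x t) : ℝ))) t :=
    ((hasDerivAt_const t (h z)).sub d1).sub dInner
  have hdet : IsUnit (Hess (x t)).det :=
    isUnit_iff_ne_zero.mpr (hHpos _ hxt).det_pos.ne'
  have hkey := key_inner A b (Hess (x t)) hdet c z (x t) hz hAx
  have hval : 0 - (inner ℝ (gradient h (x t)) v : ℝ)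
      - ((inner ℝ (gradient h (x t)) (-v) : ℝ) + (inner ℝ (matCLM (Hess (x t)) v) (z - x t) : ℝ))
      = (inner ℝ c (z - x t) : ℝ) := by
    rw [inner_neg_right, matCLM_apply]
    have : matVec (Hess (x t)) v
        = matVec (Hess (x t)) (-(matVec ((Hess (x t))⁻¹ *
            (1 - Aᵀ * (A * (Hess (x t))⁻¹ * Aᵀ)⁻¹ * A * (Hess (x t))⁻¹)) c)) := by
      rw [hv]; rfl
    rw [this, hkey]
    ring
  rw [hval] at dtot
  exact dtot

lemma antitoneOn_Ici_of_hasDerivAt {φ g : ℝ → ℝ} {T : ℝ}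
    (hd : ∀ t ∈ Ici T, HasDerivAt φ (g t) t) (hg : ∀ t ∈ Ici T, g t ≤ 0) :
    AntitoneOn φ (Ici T) := by
  refine antitoneOn_of_deriv_nonpos (convex_Ici T)
    (fun t ht => (hd t ht).continuousAt.continuousWithinAt) ?_ ?_
  · intro t ht
    rw [interior_Ici] at ht
    exact ((hd t (mem_Ici.mpr (le_of_lt ht))).differentiableAt).differentiableWithinAt
  · intro t ht
    rw [interior_Ici] at ht
    rw [(hd t (mem_Ici.mpr (le_of_lt ht))).deriv]
    exact hg t (mem_Ici.mpr (le_of_lt ht))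

lemma monotoneOn_Ici_of_hasDerivAt {φ g : ℝ → ℝ} {T : ℝ}
    (hd : ∀ t ∈ Ici T, HasDerivAt φ (g t) t) (hg : ∀ t ∈ Ici T, 0 ≤ g t) :
    MonotoneOn φ (Ici T) := by
  refine monotoneOn_of_deriv_nonneg (convex_Ici T)
    (fun t ht => (hd t ht).continuousAt.continuousWithinAt) ?_ ?_
  · intro t ht
    rw [interior_Ici] at ht
    exact ((hd t (mem_Ici.mpr (le_of_lt ht))).differentiableAt).differentiableWithinAt
  · intro t ht
    rw [interior_Ici] at ht
    rw [(hd t (mem_Ici.mpr (le_of_lt ht))).deriv]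
    exact hg t (mem_Ici.mpr (le_of_lt ht))

lemma affine_closed {n m : ℕ} (A : Matrix (Fin m) (Fin n) ℝ) (b : Fin m → ℝ) :
    IsClosed {w : E n | A.mulVec w = b} := by
  have hcont : Continuous fun w : E n => A.mulVec w := by
    refine continuous_pi fun i => ?_
    simp only [Matrix.mulVec, dotProduct]
    exact continuous_finset_sum _ fun j _ =>
      (continuous_const.mul ((EuclideanSpace.proj (𝕜 := ℝ) j).continuous))
  have : {w : E n | A.mulVec w = b} = (fun w : E n => A.mulVec w) ⁻¹' {b} := by
    ext w; simp
  rw [this]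
  exact (isClosed_singleton).preimage hcont

/-- Corollary `C:selection`.  If `h` is a Bregman function with zone
`C`, `f(x) = ⟨c,x⟩` is linear and `S(P) ≠ ∅`, then the global steepest descent solution
converges to the unique minimizer of `D_h(·, x⁰)` over `S(P)`. -/
theorem stmt11
    -- problem data: a full rank `m×n` matrix `A` (`m < n`), `b ∈ ℝᵐ`
    {n m : ℕ} (hm : 0 < m) (hmn : m < n)
    (A : Matrix (Fin m) (Fin n) ℝ) (b : Fin m → ℝ) (hrank : A.rank = m)
    -- `C` is a nonempty open convex set, `F = C ∩ {x | Ax = b}` is nonempty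
    (C : Set (E n)) (hCopen : IsOpen C) (hCconv : Convex ℝ C) (hCne : C.Nonempty)
    (hFne : (C ∩ {x | A.mulVec x = b}).Nonempty)
    (h : E n → ℝ) (Hess : E n → Matrix (Fin n) (Fin n) ℝ)
    -- `(H₀)`: `h` is of Legendre type with `int dom h = C`: it is strictly convex on `C`,
    -- `C²` on `C`, and its gradient blows up at the boundary of `C`;
    -- its Hessian `Hess` is positive definite and locally Lipschitz on `C`
    (hhC2 : ContDiffOn ℝ 2 h C) (hhconv : ConvexOn ℝ C h) (hhstrict : StrictConvexOn ℝ C h)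
    (hLeg : ∀ (z : ℕ → E n) (x' : E n), (∀ j, z j ∈ C) → x' ∈ frontier C →
      Tendsto z atTop (𝓝 x') → Tendsto (fun j => ‖gradient h (z j)‖) atTop atTop)
    (hHess : ∀ x ∈ C, HasFDerivAt (gradient h) (matCLM (Hess x)) x)
    (hHpos : ∀ x ∈ C, (Hess x).PosDef)
    (hHlip : ∀ x ∈ C, ∃ ε > 0, ∃ K : ℝ, ∀ y ∈ C ∩ Metric.ball x ε, ∀ z ∈ C ∩ Metric.ball x ε,
      ‖matCLM (Hess y) - matCLM (Hess z)‖ ≤ K * ‖y - z‖)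
    -- `h` is a Bregman function with zone `C`
    (hBcont : ContinuousOn h (closure C)) (hBstrict : StrictConvexOn ℝ (closure C) h)
    (hBlevel : ∀ a ∈ closure C, ∀ γ : ℝ, Bornology.IsBounded {y ∈ C | Dh h a y ≤ γ})
    (hBlim : ∀ y ∈ closure C, ∀ yseq : ℕ → E n, (∀ j, yseq j ∈ C) →
      Tendsto yseq atTop (𝓝 y) → Tendsto (fun j => Dh h y (yseq j)) atTop (𝓝 0))
    -- linear objective `f(x) = ⟨c,x⟩`, whose optimal set over `cl F` is nonempty
    (c : E n)
    (SP : Set (E n))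
    (hSP : SP = {z ∈ closure (C ∩ {w | A.mulVec w = b}) |
      ∀ w ∈ closure (C ∩ {w | A.mulVec w = b}), (inner ℝ c z : ℝ) ≤ (inner ℝ c w : ℝ)})
    (hSPne : SP.Nonempty)
    -- the global trajectory
    (x : ℝ → E n) (x0 : E n) (hx0 : x 0 = x0) (hx0F : x0 ∈ C ∩ {z | A.mulVec z = b})
    (hmem : ∀ t ∈ Ici (0:ℝ), x t ∈ C ∩ {z | A.mulVec z = b})
    (hode : ∀ t ∈ Ici (0:ℝ), HasDerivAt x (sdVF A Hess (fun _ => c) (x t)) t) :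
    ∃ xstar : E n, xstar ∈ SP ∧
      (∀ z ∈ SP, Dh h xstar x0 ≤ Dh h z x0) ∧
      (∀ z ∈ SP, (∀ w ∈ SP, Dh h z x0 ≤ Dh h w x0) → z = xstar) ∧
      Tendsto x atTop (𝓝 xstar) := by
  obtain ⟨zs, hzsSP⟩ := hSPne
  have hSPmem : ∀ z ∈ SP, z ∈ closure (C ∩ {w | A.mulVec w = b}) ∧
      ∀ w ∈ closure (C ∩ {w | A.mulVec w = b}), (inner ℝ c z : ℝ) ≤ (inner ℝ c w : ℝ) := by
    intro z hz; rw [hSP] at hz; exact hz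
  have hclF_subC : closure (C ∩ {w | A.mulVec w = b}) ⊆ closure C :=
    closure_mono inter_subset_left
  have hclF_aff : ∀ z ∈ closure (C ∩ {w | A.mulVec w = b}), A.mulVec z = b := by
    intro z hz
    have h1 : closure (C ∩ {w | A.mulVec w = b}) ⊆ closure {w : E n | A.mulVec w = b} :=
      closure_mono inter_subset_right
    have := h1 hz
    rwa [(affine_closed A b).closure_eq] at this
  have hFclF : ∀ t ∈ Ici (0:ℝ), x t ∈ closure (C ∩ {w | A.mulVec w = b}) :=
    fun t ht => subset_closure (hmem t ht)
  have hmemC : ∀ t ∈ Ici (0:ℝ), x t ∈ C := fun t ht => (hmem t ht).1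
  have hmemA : ∀ t ∈ Ici (0:ℝ), A.mulVec (x t) = b := fun t ht => (hmem t ht).2
  set v : ℝ := inner ℝ c zs with hvdef
  have hval : ∀ z ∈ SP, (inner ℝ c z : ℝ) = v := fun z hz =>
    le_antisymm ((hSPmem z hz).2 zs (hSPmem zs hzsSP).1) ((hSPmem zs hzsSP).2 z (hSPmem z hz).1)
  have hvle : ∀ w ∈ closure (C ∩ {w | A.mulVec w = b}), v ≤ (inner ℝ c w : ℝ) :=
    fun w hw => (hSPmem zs hzsSP).2 w hw
  -- derivative of the Lyapunov functions
  have hder : ∀ z : E n, A.mulVec z = b → ∀ t ∈ Ici (0:ℝ),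
      HasDerivAt (fun s => Dh h z (x s)) ((inner ℝ c z : ℝ) - (inner ℝ c (x t) : ℝ)) t := by
    intro z hz t ht
    have := hasDerivAt_Dh A b hCopen hhC2 hHess hHpos c z hz (hmemC t ht) (hmemA t ht) (hode t ht)
    rwa [inner_sub_right] at this
  have hnonneg : ∀ z ∈ closure C, ∀ t ∈ Ici (0:ℝ), 0 ≤ Dh h z (x t) := fun z hz t ht =>
    Dh_nonneg hCopen hhC2 hBstrict.convexOn hz (hmemC t ht)
  have hanti : ∀ z ∈ SP, AntitoneOn (fun s => Dh h z (x s)) (Ici 0) := by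
    intro z hz
    refine antitoneOn_Ici_of_hasDerivAt (g := fun t => (inner ℝ c z : ℝ) - (inner ℝ c (x t) : ℝ))
      (fun t ht => hder z (hclF_aff z (hSPmem z hz).1) t ht) (fun t ht => ?_)
    have hgoal : (inner ℝ c z : ℝ) - (inner ℝ c (x t) : ℝ) ≤ 0 := by
      rw [hval z hz]
      have := hvle (x t) (hFclF t ht)
      linarith
    exact hgoal
  -- the objective values approach v along some divergent times
  have hcross : ∀ δ : ℝ, 0 < δ → ∀ T : ℝ, ∃ t, max T 0 ≤ t ∧ (inner ℝ c (x t) : ℝ) < v + δ := by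
    intro δ hδ T
    by_contra hcon
    push_neg at hcon
    set T' := max T 0 with hT'
    have hT0 : (0:ℝ) ≤ T' := le_max_right T 0
    have hzsb : A.mulVec zs = b := hclF_aff zs (hSPmem zs hzsSP).1
    have hg : AntitoneOn (fun s => Dh h zs (x s) + δ * s) (Ici T') := by
      refine antitoneOn_Ici_of_hasDerivAt
        (g := fun t => ((inner ℝ c zs : ℝ) - (inner ℝ c (x t) : ℝ)) + δ)
        (fun t ht => ?_) (fun t ht => ?_)
      · have hlin : HasDerivAt (fun s : ℝ => δ * s) δ t := by
          simpa using (hasDerivAt_id t).const_mul δ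
        exact (hder zs hzsb t (le_trans hT0 ht)).add hlin
      · have h4 := hcon t ht
        have hgoal : ((inner ℝ c zs : ℝ) - (inner ℝ c (x t) : ℝ)) + δ ≤ 0 := by
          rw [← hvdef]; linarith
        exact hgoal
    have hD0nn : 0 ≤ Dh h zs (x T') := hnonneg zs (hclF_subC (hSPmem zs hzsSP).1) T' hT0
    set D0 := Dh h zs (x T') with hD0
    set t1 := T' + (D0 + 1) / δ with ht1
    have ht1ge : T' ≤ t1 := by
      rw [ht1]
      have : 0 ≤ (D0 + 1) / δ := div_nonneg (by linarith) hδ.le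
      linarith
    have hga := hg (self_mem_Ici) (mem_Ici.mpr ht1ge) ht1ge
    have hnn := hnonneg zs (hclF_subC (hSPmem zs hzsSP).1) t1 (le_trans hT0 ht1ge)
    have hcancel : δ * ((D0 + 1) / δ) = D0 + 1 := mul_div_cancel₀ _ hδ.ne'
    simp only [ht1] at hga
    nlinarith [hga, hnn, hcancel]
  choose tp htp1 htp2 using fun j : ℕ => hcross (1/((j:ℝ)+1)) (by positivity) (j:ℝ)
  have htpIci : ∀ j, tp j ∈ Ici (0:ℝ) := fun j => le_trans (le_max_right _ _) (htp1 j)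
  have htpj : ∀ j : ℕ, (j:ℝ) ≤ tp j := fun j => le_trans (le_max_left _ _) (htp1 j)
  -- boundedness of the trajectory
  set γ := Dh h zs x0 with hγ
  have hmono0 : ∀ t ∈ Ici (0:ℝ), Dh h zs (x t) ≤ γ := by
    intro t ht
    have h1 := hanti zs hzsSP self_mem_Ici ht ht
    have h2 : Dh h zs (x 0) = γ := by rw [hx0]
    exact le_trans h1 (le_of_eq h2)
  have hSbdd : Bornology.IsBounded {y ∈ C | Dh h zs y ≤ γ} :=
    hBlevel zs (hclF_subC (hSPmem zs hzsSP).1) γ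
  have hxS : ∀ t ∈ Ici (0:ℝ), x t ∈ {y ∈ C | Dh h zs y ≤ γ} :=
    fun t ht => ⟨hmemC t ht, hmono0 t ht⟩
  obtain ⟨xbar, hxbarclS, σ, hσ, hσtend⟩ :=
    tendsto_subseq_of_bounded hSbdd (fun j => hxS (tp j) (htpIci j))
  have hxbarC : xbar ∈ closure C :=
    (closure_mono (fun y (hy : y ∈ {y ∈ C | Dh h zs y ≤ γ}) => hy.1)) hxbarclS
  have htdiv : Tendsto (fun j => tp (σ j)) atTop atTop := by
    apply tendsto_atTop_mono
      (fun j => le_trans (Nat.cast_le.mpr (hσ.le_apply)) (htpj (σ j)))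
    exact tendsto_natCast_atTop_atTop
  have hxbarclF : xbar ∈ closure (C ∩ {w | A.mulVec w = b}) :=
    mem_closure_of_tendsto hσtend (Eventually.of_forall fun j => hmem _ (htpIci (σ j)))
  have hfc : Tendsto (fun j => (inner ℝ c (x (tp (σ j))) : ℝ)) atTop (𝓝 (inner ℝ c xbar : ℝ)) :=
    Filter.Tendsto.inner tendsto_const_nhds hσtend
  have hvxbar : (inner ℝ c xbar : ℝ) = v := by
    have hup : Tendsto (fun j : ℕ => v + 1/((j:ℝ)+1)) atTop (𝓝 (v + 0)) :=
      Filter.Tendsto.const_add v tendsto_one_div_add_atTop_nhds_zero_nat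
    rw [add_zero] at hup
    refine le_antisymm ?_ ?_
    · refine le_of_tendsto_of_tendsto' hfc hup (fun j => ?_)
      have h1 : (inner ℝ c (x (tp (σ j))) : ℝ) < v + 1/((σ j : ℝ)+1) := htp2 (σ j)
      have h2 : 1/((σ j : ℝ)+1) ≤ 1/((j:ℝ)+1) := by
        apply one_div_le_one_div_of_le (by positivity)
        have : (j:ℝ) ≤ (σ j : ℝ) := Nat.cast_le.mpr hσ.le_apply
        linarith
      linarith
    · exact ge_of_tendsto hfc (Eventually.of_forall fun j => hvle _ (hFclF _ (htpIci (σ j))))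
  have hxbarSP : xbar ∈ SP := by
    rw [hSP]
    refine ⟨hxbarclF, fun w hw => ?_⟩
    rw [hvxbar]
    exact hvle w hw
  have hxbaraff : A.mulVec xbar = b := hclF_aff xbar hxbarclF
  have hantixbar := hanti xbar hxbarSP
  -- the Lyapunov function of xbar tends to 0
  obtain ⟨L, hLtend⟩ : ∃ L, Tendsto (fun t => Dh h xbar (x t)) atTop (𝓝 L) := by
    set ψ := fun t : ℝ => Dh h xbar (x (max t 0)) with hψ
    have hψanti : Antitone ψ := by
      intro a b' hab
      exact hantixbar (le_max_right a 0) (le_max_right b' 0) (max_le_max hab le_rfl)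
    have hψbdd : BddBelow (range ψ) := by
      refine ⟨0, fun y hy => ?_⟩
      obtain ⟨t, rfl⟩ := hy
      exact hnonneg xbar hxbarC _ (le_max_right t 0)
    refine ⟨⨅ t, ψ t, ?_⟩
    have h1 := tendsto_atTop_ciInf hψanti hψbdd
    refine h1.congr' ?_
    filter_upwards [eventually_ge_atTop (0:ℝ)] with t ht
    rw [hψ]
    simp [max_eq_left ht]
  have hL0 : L = 0 := by
    have h1 : Tendsto (fun j => Dh h xbar (x (tp (σ j)))) atTop (𝓝 L) := hLtend.comp htdiv
    have h2 : Tendsto (fun j => Dh h xbar (x (tp (σ j)))) atTop (𝓝 0) :=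
      hBlim xbar hxbarC (fun j => x (tp (σ j))) (fun j => hmemC _ (htpIci (σ j))) hσtend
    exact tendsto_nhds_unique h1 h2
  rw [hL0] at hLtend
  -- the difference of Lyapunov functions is constant
  have hconstdiff : ∀ z ∈ SP, ∀ t ∈ Ici (0:ℝ),
      Dh h z (x t) - Dh h xbar (x t) = Dh h z x0 - Dh h xbar x0 := by
    intro z hz t ht
    have hd : ∀ s ∈ Ici (0:ℝ),
        HasDerivAt (fun u => Dh h z (x u) - Dh h xbar (x u)) ((fun _ : ℝ => (0:ℝ)) s) s := by
      intro s hs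
      have h1 := hder z (hclF_aff z (hSPmem z hz).1) s hs
      have h2 := hder xbar hxbaraff s hs
      have h3 := h1.sub h2
      have hz0 : (inner ℝ c z : ℝ) = (inner ℝ c xbar : ℝ) := by rw [hval z hz, hvxbar]
      exact h3.congr_deriv (by rw [hz0]; ring)
    have hA := antitoneOn_Ici_of_hasDerivAt hd (fun _ _ => le_rfl)
    have hM := monotoneOn_Ici_of_hasDerivAt hd (fun _ _ => le_rfl)
    have heq := le_antisymm (hA self_mem_Ici ht ht) (hM self_mem_Ici ht ht)
    change Dh h z (x t) - Dh h xbar (x t) = Dh h z (x 0) - Dh h xbar (x 0) at heq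
    rw [hx0] at heq
    exact heq
  -- minimality of xbar
  have hmin : ∀ z ∈ SP, Dh h xbar x0 ≤ Dh h z x0 := by
    intro z hz
    have hzt : Tendsto (fun t => Dh h z (x t)) atTop (𝓝 (Dh h z x0 - Dh h xbar x0)) := by
      have hshift : Tendsto (fun t => Dh h xbar (x t) + (Dh h z x0 - Dh h xbar x0)) atTop
          (𝓝 (0 + (Dh h z x0 - Dh h xbar x0))) := hLtend.add tendsto_const_nhds
      rw [zero_add] at hshift
      refine hshift.congr' ?_
      filter_upwards [eventually_ge_atTop (0:ℝ)] with t ht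
      have := hconstdiff z hz t ht
      linarith
    have h1 := ge_of_tendsto hzt (by
      filter_upwards [eventually_ge_atTop (0:ℝ)] with t ht
      exact hnonneg z (hclF_subC (hSPmem z hz).1) t ht)
    linarith
  refine ⟨xbar, hxbarSP, hmin, ?_, ?_⟩
  · -- uniqueness
    intro z hz hzmin
    by_contra hne
    have heq : Dh h z x0 = Dh h xbar x0 := le_antisymm (hzmin xbar hxbarSP) (hmin z hz)
    have hz0 : Tendsto (fun j => Dh h z (x (tp (σ j)))) atTop (𝓝 0) := by
      have h2 : Tendsto (fun j => Dh h xbar (x (tp (σ j)))) atTop (𝓝 0) := hLtend.comp htdiv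
      refine h2.congr fun j => ?_
      have := hconstdiff z hz (tp (σ j)) (htpIci (σ j))
      rw [heq] at this
      linarith
    exact midpoint_contra hCopen hhC2 hBstrict (hclF_subC (hSPmem z hz).1) hxbarC hne
      (fun j => hmemC _ (htpIci (σ j))) hz0 (hLtend.comp htdiv)
  · -- convergence of the trajectory
    rw [Metric.tendsto_atTop]
    by_contra hcon
    push_neg at hcon
    obtain ⟨ε, hε, hfar⟩ := hcon
    choose s hs1 hs2 using fun j : ℕ => hfar (max (j:ℝ) 0)
    have hsIci : ∀ j, s j ∈ Ici (0:ℝ) := fun j => le_trans (le_max_right _ _) (hs1 j)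
    obtain ⟨xhat, hxhatclS, τ, hτ, hτtend⟩ :=
      tendsto_subseq_of_bounded hSbdd (fun j => hxS (s j) (hsIci j))
    have hxhatC : xhat ∈ closure C :=
      (closure_mono (fun y (hy : y ∈ {y ∈ C | Dh h zs y ≤ γ}) => hy.1)) hxhatclS
    have hsdiv : Tendsto (fun k => s (τ k)) atTop atTop := by
      apply tendsto_atTop_mono (fun k =>
        le_trans (le_trans (Nat.cast_le.mpr hτ.le_apply) (le_max_left _ _)) (hs1 (τ k)))
      exact tendsto_natCast_atTop_atTop
    have hdist : Tendsto (fun k => dist (x (s (τ k))) xbar) atTop (𝓝 (dist xhat xbar)) :=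
      hτtend.dist tendsto_const_nhds
    have hdge : ε ≤ dist xhat xbar :=
      ge_of_tendsto hdist (Eventually.of_forall fun k => hs2 (τ k))
    have hne : xbar ≠ xhat := by
      intro heq
      rw [heq, dist_self] at hdge
      linarith
    exact midpoint_contra hCopen hhC2 hBstrict hxbarC hxhatC hne
      (fun k => hmemC _ (hsIci (τ k)))
      (hLtend.comp hsdiv)
      (hBlim xhat hxhatC _ (fun k => hmemC _ (hsIci (τ k))) hτtend)
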